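/- Let ρ be a density matrix on ℂ^{d_1} ⊗ … ⊗ ℂ^{d_n}, let P_s be an orthogonal projection on ℂ^{d_s} for each s, set Q = P_1 ⊗ … ⊗ P_n and c = Tr(Qρ). If c > 0, then the renormalized projected state ρ' = QρQ/c satisfies ‖ρ − ρ'‖₁ ≤ 2 √( ∑_{s=1}^{n} Tr[(I − P_s) ρ_{A_s}] ). -/

import Mathlib

open scoped ENNReal ComplexOrder
open Matrix

noncomputable section

/-- A density matrix: positive semidefinite with unit trace. -/
def Matrix.IsDensity {I : Type*} [Fintype I] (ρ : Matrix I I ℂ) : Prop :=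
  ρ.PosSemidef ∧ ρ.trace = 1

/-- An orthogonal projection matrix: Hermitian and idempotent. -/
def Matrix.IsOrthoProj {I : Type*} [Fintype I] (P : Matrix I I ℂ) : Prop :=
  P.IsHermitian ∧ P * P = P

/-- The Kronecker product `P 1 ⊗ … ⊗ P n` of matrices on the factors. -/
def piKron {n : ℕ} {d : Fin n → ℕ} (P : ∀ s, Matrix (Fin (d s)) (Fin (d s)) ℂ) :
    Matrix (∀ s, Fin (d s)) (∀ s, Fin (d s)) ℂ :=
  Matrix.of fun i j => ∏ s, P s (i s) (j s)

/-- The `s`-th marginal of a multipartite matrix (partial trace over all other factors). -/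
def pmarginal {n : ℕ} {d : Fin n → ℕ}
    (ρ : Matrix (∀ s, Fin (d s)) (∀ s, Fin (d s)) ℂ) (s : Fin n) :
    Matrix (Fin (d s)) (Fin (d s)) ℂ :=
  Matrix.of fun i i' => ∑ j : ∀ t, Fin (d t), if j s = i then ρ j (Function.update j s i') else 0

/-- Matrix logarithm of a Hermitian matrix via the spectral decomposition
(with the convention `ln 0 = 0` on the kernel); junk value `0` otherwise. -/
def matLog {I : Type*} [Fintype I] [DecidableEq I] (ρ : Matrix I I ℂ) : Matrix I I ℂ :=
  if h : ρ.IsHermitian then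
    (h.eigenvectorUnitary : Matrix I I ℂ) *
      Matrix.diagonal (fun k => (Real.log (h.eigenvalues k) : ℂ)) *
      (star (h.eigenvectorUnitary : Matrix I I ℂ))
  else 0

open Classical in
/-- Quantum relative entropy `D(ρ‖σ) ∈ [0,∞]`:
`Tr[ρ(ln ρ − ln σ)]` if `range ρ ⊆ range σ`, and `+∞` otherwise. -/
def qRelEnt {I : Type*} [Fintype I] [DecidableEq I] (ρ σ : Matrix I I ℂ) : ℝ≥0∞ :=
  if Set.range ρ.mulVec ⊆ Set.range σ.mulVec then
    ENNReal.ofReal ((ρ * (matLog ρ - matLog σ)).trace.re)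
  else ∞

/-- Separable states: convex hull of product density matrices. -/
def IsSepState {n : ℕ} {d : Fin n → ℕ}
    (σ : Matrix (∀ s, Fin (d s)) (∀ s, Fin (d s)) ℂ) : Prop :=
  σ ∈ convexHull ℝ
    {τ | ∃ P : ∀ s, Matrix (Fin (d s)) (Fin (d s)) ℂ, (∀ s, (P s).IsDensity) ∧ τ = piKron P}

/-- The relative entropy of entanglement `E_R(ρ) = inf { D(ρ‖σ) : σ separable }`. -/
def relEntEnt {n : ℕ} {d : Fin n → ℕ}
    (ρ : Matrix (∀ s, Fin (d s)) (∀ s, Fin (d s)) ℂ) : ℝ≥0∞ :=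
  ⨅ (σ : Matrix (∀ s, Fin (d s)) (∀ s, Fin (d s)) ℂ) (_ : IsSepState σ), qRelEnt ρ σ

/-- Von Neumann entropy `H(ρ) = −∑ λ_k ln λ_k` (junk value `0` for non-Hermitian input). -/
def vnEntropy {I : Type*} [Fintype I] [DecidableEq I] (ρ : Matrix I I ℂ) : ℝ :=
  if h : ρ.IsHermitian then -∑ k, h.eigenvalues k * Real.log (h.eigenvalues k) else 0

/-- Trace norm `‖A‖₁ = Tr √(AᴴA)`. -/
def traceNorm {I : Type*} [Fintype I] [DecidableEq I] (A : Matrix I I ℂ) : ℝ :=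
  (((Matrix.posSemidef_conjTranspose_mul_self A).1.eigenvectorUnitary : Matrix I I ℂ) *
      Matrix.diagonal (fun k => ((Real.sqrt ((Matrix.posSemidef_conjTranspose_mul_self A).1.eigenvalues k) : ℝ) : ℂ)) *
      (star (Matrix.posSemidef_conjTranspose_mul_self A).1.eigenvectorUnitary : Matrix I I ℂ)).trace.re

end

/-! ### Auxiliary lemmas for the gentle measurement theorem -/

noncomputable section GentleAux
set_option linter.unusedSectionVars false
set_option maxHeartbeats 1000000

variable {I : Type*} [Fintype I] [DecidableEq I]

lemma gm_psd_diag_re_nonneg {M : Matrix I I ℂ} (hM : M.PosSemidef) (i : I) : 0 ≤ (M i i).re := by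
  have := hM.dotProduct_mulVec_nonneg (Pi.single i 1)
  have hd : (star (Pi.single i 1) ⬝ᵥ M *ᵥ Pi.single i 1) = M i i := by
    simp [Matrix.mulVec_single, dotProduct, Pi.single_apply, apply_ite (star : ℂ → ℂ)]
  rw [hd] at this
  exact (Complex.le_def.mp this).1

lemma gm_psd_trace_re_nonneg {M : Matrix I I ℂ} (hM : M.PosSemidef) : 0 ≤ M.trace.re := by
  rw [Matrix.trace, Complex.re_sum]
  exact Finset.sum_nonneg fun i _ => gm_psd_diag_re_nonneg hM i

lemma gm_trace_mul_re_nonneg {A B : Matrix I I ℂ} (hA : A.PosSemidef) (hB : B.PosSemidef) :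
    0 ≤ (A * B).trace.re := by
  obtain ⟨C, rfl⟩ : ∃ C : Matrix I I ℂ, B = Cᴴ * C := by
    open scoped MatrixOrder in
    exact ⟨CFC.sqrt B, by rw [(Matrix.nonneg_iff_posSemidef.mp (CFC.sqrt_nonneg B)).1.eq,
      CFC.sqrt_mul_sqrt_self B hB.nonneg]⟩
  have h1 : (A * (Cᴴ * C)).trace = (C * A * Cᴴ).trace := by
    rw [← Matrix.mul_assoc, Matrix.trace_mul_cycle]
  rw [h1]
  exact gm_psd_trace_re_nonneg (hA.mul_mul_conjTranspose_same C)

lemma gm_orthoProj_posSemidef {M : Matrix I I ℂ} (hM : M.IsOrthoProj) : M.PosSemidef := by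
  have := Matrix.posSemidef_conjTranspose_mul_self M
  rwa [hM.1.eq, hM.2] at this

lemma gm_orthoProj_one_sub {M : Matrix I I ℂ} (hM : M.IsOrthoProj) : (1 - M).IsOrthoProj := by
  constructor
  · show (1 - M)ᴴ = 1 - M
    rw [Matrix.conjTranspose_sub, Matrix.conjTranspose_one, hM.1.eq]
  · rw [sub_mul, one_mul, mul_sub, mul_one, hM.2]; abel

lemma gm_mul_psd_of_commute {X Y : Matrix I I ℂ} (hX : X.IsOrthoProj) (hY : Y.IsOrthoProj)
    (hc : X * Y = Y * X) : (X * Y).PosSemidef := by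
  have herm : (X * Y)ᴴ = X * Y := by
    rw [Matrix.conjTranspose_mul, hX.1.eq, hY.1.eq, ← hc]
  have hsq : (X * Y) * (X * Y) = X * Y := by
    calc X * Y * (X * Y) = X * (Y * X) * Y := by noncomm_ring
    _ = X * (X * Y) * Y := by rw [← hc]
    _ = (X * X) * (Y * Y) := by noncomm_ring
    _ = X * Y := by rw [hX.2, hY.2]
  have := Matrix.posSemidef_conjTranspose_mul_self (X * Y)
  rwa [herm, hsq] at this

lemma gm_eq_zero_of_trace_self_mul_conjTranspose {A : Matrix I I ℂ}
    (h : (A * Aᴴ).trace.re = 0) : A = 0 := by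
  have hform : (A * Aᴴ).trace.re = ∑ i, ∑ j, Complex.normSq (A i j) := by
    rw [Matrix.trace, Complex.re_sum]
    refine Finset.sum_congr rfl fun i _ => ?_
    rw [Matrix.diag, Matrix.mul_apply, Complex.re_sum]
    refine Finset.sum_congr rfl fun j _ => ?_
    rw [Matrix.conjTranspose_apply, Complex.star_def, Complex.mul_conj]
    exact Complex.ofReal_re _
  rw [hform] at h
  ext i j
  have h1 : ∀ i ∈ Finset.univ, (0:ℝ) ≤ ∑ j, Complex.normSq (A i j) :=
    fun i _ => Finset.sum_nonneg fun j _ => Complex.normSq_nonneg _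
  have h2 := (Finset.sum_eq_zero_iff_of_nonneg h1).mp h i (Finset.mem_univ i)
  have h3 := (Finset.sum_eq_zero_iff_of_nonneg
    (fun j _ => Complex.normSq_nonneg (A i j))).mp h2 j (Finset.mem_univ j)
  simpa [Complex.normSq_eq_zero] using h3

/-! #### Kronecker product lemmas -/

variable {n : ℕ} {d : Fin n → ℕ}

lemma gm_piKron_congr {A B : ∀ s, Matrix (Fin (d s)) (Fin (d s)) ℂ} (h : ∀ s, A s = B s) :
    piKron A = piKron B := by
  have : A = B := funext h
  rw [this]

lemma gm_piKron_mul (A B : ∀ s, Matrix (Fin (d s)) (Fin (d s)) ℂ) :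
    piKron A * piKron B = piKron (fun s => A s * B s) := by
  ext i j
  simp only [piKron, Matrix.mul_apply, Matrix.of_apply]
  rw [show (∏ s, ∑ m, A s (i s) m * B s m (j s)) =
      ∑ x : ∀ s, Fin (d s), ∏ s, A s (i s) (x s) * B s (x s) (j s) from
    Fintype.prod_sum (fun s m => A s (i s) m * B s m (j s))]
  exact Finset.sum_congr rfl fun x _ => (Finset.prod_mul_distrib).symm

lemma gm_piKron_one : piKron (fun s => (1 : Matrix (Fin (d s)) (Fin (d s)) ℂ)) = 1 := by
  ext i j
  simp only [piKron, Matrix.of_apply, Matrix.one_apply]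
  rw [Fintype.prod_boole]
  simp [funext_iff]

lemma gm_piKron_conjTranspose (A : ∀ s, Matrix (Fin (d s)) (Fin (d s)) ℂ) :
    (piKron A)ᴴ = piKron (fun s => (A s)ᴴ) := by
  ext i j
  simp only [piKron, Matrix.conjTranspose_apply, Matrix.of_apply, star_prod]

/-- projections acting on a subset of the slots -/
def gmQT (P : ∀ s, Matrix (Fin (d s)) (Fin (d s)) ℂ) (T : Finset (Fin n)) :
    Matrix (∀ s, Fin (d s)) (∀ s, Fin (d s)) ℂ :=
  piKron (fun s => if s ∈ T then P s else 1)

variable {P : ∀ s, Matrix (Fin (d s)) (Fin (d s)) ℂ}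

lemma gmQT_isOrthoProj (hP : ∀ s, (P s).IsOrthoProj) (T : Finset (Fin n)) :
    (gmQT P T).IsOrthoProj := by
  constructor
  · show (gmQT P T)ᴴ = gmQT P T
    rw [gmQT, gm_piKron_conjTranspose]
    refine gm_piKron_congr fun t => ?_
    by_cases h : t ∈ T <;> simp [h, (hP t).1.eq]
  · rw [gmQT, gm_piKron_mul]
    refine gm_piKron_congr fun t => ?_
    by_cases h : t ∈ T <;> simp [h, (hP t).2]

lemma gmQT_empty : gmQT P (∅ : Finset (Fin n)) = 1 := by
  rw [gmQT]
  simpa using gm_piKron_one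

lemma gmQT_univ : gmQT P (Finset.univ : Finset (Fin n)) = piKron P := by
  rw [gmQT]; exact gm_piKron_congr fun t => by simp

lemma gmQT_insert {s : Fin n} {T : Finset (Fin n)} (hs : s ∉ T) :
    gmQT P (insert s T) = gmQT P {s} * gmQT P T := by
  rw [gmQT, gmQT, gmQT, gm_piKron_mul]
  refine gm_piKron_congr fun t => ?_
  by_cases h1 : t = s
  · subst h1; simp [hs]
  · by_cases h2 : t ∈ T <;> simp [h1, h2]

lemma gmQT_comm (s : Fin n) (T : Finset (Fin n)) (hs : s ∉ T) :
    gmQT P {s} * gmQT P T = gmQT P T * gmQT P {s} := by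
  rw [gmQT, gmQT, gm_piKron_mul, gm_piKron_mul]
  refine gm_piKron_congr fun t => ?_
  by_cases h1 : t = s
  · subst h1; simp [hs]
  · by_cases h2 : t ∈ T <;> simp [h1, h2]

/-! #### Marginal lemmas -/

lemma gm_pmarginal_trace (ρ : Matrix (∀ s, Fin (d s)) (∀ s, Fin (d s)) ℂ) (s : Fin n) :
    (pmarginal ρ s).trace = ρ.trace := by
  rw [Matrix.trace, Matrix.trace]
  simp only [Matrix.diag, pmarginal, Matrix.of_apply]
  rw [Finset.sum_comm]
  refine Finset.sum_congr rfl fun j _ => ?_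
  rw [Finset.sum_ite_eq Finset.univ (j s) (fun a => ρ j (Function.update j s a))]
  simp

/-- collapse a sum with an off-`s` delta -/
lemma gm_sum_update_collapse {s : Fin n} (j : ∀ t, Fin (d t)) (g : (∀ t, Fin (d t)) → ℂ) :
    ∑ i : ∀ t, Fin (d t), (if (∀ t ∈ Finset.univ.erase s, i t = j t) then g i else 0)
      = ∑ a : Fin (d s), g (Function.update j s a) := by
  rw [← Finset.sum_filter]
  have himg : Finset.filter (fun i : ∀ t, Fin (d t) => ∀ t ∈ Finset.univ.erase s, i t = j t)
      Finset.univ = Finset.image (fun a => Function.update j s a) Finset.univ := by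
    ext i
    simp only [Finset.mem_filter, Finset.mem_univ, true_and, Finset.mem_image]
    constructor
    · intro h
      refine ⟨i s, ?_⟩
      funext t
      by_cases ht : t = s
      · subst ht; simp
      · rw [Function.update_of_ne ht, h t (Finset.mem_erase.mpr ⟨ht, Finset.mem_univ t⟩)]
    · rintro ⟨a, rfl⟩ t ht
      rw [Function.update_of_ne (Finset.mem_erase.mp ht).1]
  rw [himg, Finset.sum_image]
  intro a _ b _ hab
  have := congrFun hab s
  simpa using this

lemma gmQT_singleton_entry (s : Fin n) (i j : ∀ t, Fin (d t)) : gmQT P {s} i j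
      = P s (i s) (j s) * (if (∀ t ∈ Finset.univ.erase s, i t = j t) then 1 else 0) := by
  rw [gmQT, piKron]
  show (∏ t, (if t ∈ ({s} : Finset (Fin n)) then P t else 1) (i t) (j t)) = _
  rw [← Finset.mul_prod_erase Finset.univ _ (Finset.mem_univ s)]
  congr 1
  · simp
  · have hfac : ∀ t ∈ Finset.univ.erase s,
        (if t ∈ ({s} : Finset (Fin n)) then P t else 1) (i t) (j t)
          = (if i t = j t then (1:ℂ) else 0) := by
      intro t ht
      have : t ≠ s := (Finset.mem_erase.mp ht).1
      simp [this, Matrix.one_apply]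
    rw [Finset.prod_congr rfl hfac, Finset.prod_boole]; simp

lemma gmQT_singleton_trace (ρ : Matrix (∀ s, Fin (d s)) (∀ s, Fin (d s)) ℂ) (s : Fin n) :
    (gmQT P {s} * ρ).trace = (P s * pmarginal ρ s).trace := by
  rw [Matrix.trace, Matrix.trace]
  simp only [Matrix.diag, Matrix.mul_apply]
  have lhs_eq : ∑ i : ∀ t, Fin (d t), ∑ j, gmQT P {s} i j * ρ j i
      = ∑ j : ∀ t, Fin (d t), ∑ a, P s a (j s) * ρ j (Function.update j s a) := by
    rw [Finset.sum_comm]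
    refine Finset.sum_congr rfl fun j _ => ?_
    have : ∀ i, gmQT P {s} i j * ρ j i
        = (if (∀ t ∈ Finset.univ.erase s, i t = j t) then P s (i s) (j s) * ρ j i else 0) := by
      intro i
      rw [gmQT_singleton_entry]
      split <;> ring
    simp only [this]
    rw [gm_sum_update_collapse j (fun i => P s (i s) (j s) * ρ j i)]
    refine Finset.sum_congr rfl fun a _ => ?_
    simp
  rw [lhs_eq]
  simp only [pmarginal, Matrix.of_apply, Finset.mul_sum, mul_ite, mul_zero]
  rw [Finset.sum_comm]
  refine Finset.sum_congr rfl fun a _ => ?_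
  rw [Finset.sum_comm]
  refine Finset.sum_congr rfl fun j _ => ?_
  rw [Finset.sum_ite_eq Finset.univ (j s) (fun b => P s a b * ρ j (Function.update j s a))]
  simp

/-! #### Union bound -/

lemma gm_union_bound (hP : ∀ s, (P s).IsOrthoProj)
    (ρ : Matrix (∀ s, Fin (d s)) (∀ s, Fin (d s)) ℂ) (hρ : ρ.PosSemidef)
    (T : Finset (Fin n)) :
    ((1 - gmQT P T) * ρ).trace.re ≤ ∑ s ∈ T, ((1 - gmQT P {s}) * ρ).trace.re := by
  induction T using Finset.induction_on with
  | empty => rw [gmQT_empty]; simp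
  | @insert a T ha ih =>
    have hXY : gmQT P (insert a T) = gmQT P {a} * gmQT P T := gmQT_insert ha
    set X := gmQT P {a}
    set Y := gmQT P T
    have hcomm : X * Y = Y * X := gmQT_comm a T ha
    have hXop : X.IsOrthoProj := gmQT_isOrthoProj hP {a}
    have hYop : Y.IsOrthoProj := gmQT_isOrthoProj hP T
    have hM : ((1 - X) * (1 - Y)).PosSemidef := by
      refine gm_mul_psd_of_commute (gm_orthoProj_one_sub hXop) (gm_orthoProj_one_sub hYop) ?_
      have h1 : (1 - X) * (1 - Y) = 1 - X - Y + X * Y := by noncomm_ring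
      have h2 : (1 - Y) * (1 - X) = 1 - X - Y + Y * X := by noncomm_ring
      rw [h1, h2, hcomm]
    have hmat : (1 - gmQT P (insert a T)) * ρ
        = (1 - X) * ρ + (1 - Y) * ρ - ((1 - X) * (1 - Y)) * ρ := by
      rw [hXY]; noncomm_ring
    have htr : ((1 - gmQT P (insert a T)) * ρ).trace.re
        = ((1 - X) * ρ).trace.re + ((1 - Y) * ρ).trace.re
          - (((1 - X) * (1 - Y)) * ρ).trace.re := by
      rw [hmat, Matrix.trace_sub, Matrix.trace_add, Complex.sub_re, Complex.add_re]
    have hpos : 0 ≤ (((1 - X) * (1 - Y)) * ρ).trace.re := gm_trace_mul_re_nonneg hM hρ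
    rw [htr, Finset.sum_insert ha]
    linarith

/-! #### Duality and trace norm -/

lemma gm_unit_conj_mul {V : Matrix I I ℂ} (hV : star V * V = 1) (f g : I → ℂ) :
    (V * Matrix.diagonal f * star V) * (V * Matrix.diagonal g * star V)
      = V * Matrix.diagonal (f * g) * star V := by
  rw [show (V * Matrix.diagonal f * star V) * (V * Matrix.diagonal g * star V)
      = V * Matrix.diagonal f * (star V * V) * Matrix.diagonal g * star V from by noncomm_ring,
    hV, mul_one, mul_assoc V, Matrix.diagonal_mul_diagonal]
  rfl

lemma gm_unit_conj_trace {V : Matrix I I ℂ} (hV : star V * V = 1) (f : I → ℂ) :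
    (V * Matrix.diagonal f * star V).trace = ∑ k, f k := by
  rw [Matrix.trace_mul_cycle, hV, one_mul, Matrix.trace_diagonal]

lemma gm_traceNorm_eq (A B : Matrix I I ℂ) (hB : B.PosSemidef) (hB2 : B * B = Aᴴ * A) :
    traceNorm A = B.trace.re := by
  have hA := Matrix.posSemidef_conjTranspose_mul_self A
  set V : Matrix I I ℂ := ↑(hA.1.eigenvectorUnitary) with hVdef
  have hV1 : star V * V = 1 := mem_unitaryGroup_iff'.mp (hA.1.eigenvectorUnitary).2
  set M : Matrix I I ℂ := V * Matrix.diagonal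
    (fun k => ((Real.sqrt (hA.1.eigenvalues k) : ℝ) : ℂ)) * star V with hM
  have hMeq : traceNorm A = M.trace.re := rfl
  have hMpsd : M.PosSemidef := by
    rw [hM, Matrix.star_eq_conjTranspose]
    refine Matrix.PosSemidef.mul_mul_conjTranspose_same ?_ V
    refine Matrix.posSemidef_diagonal_iff.mpr fun k => ?_
    exact_mod_cast Real.sqrt_nonneg _
  have hMM : M * M = Aᴴ * A := by
    rw [hM, gm_unit_conj_mul hV1]
    have hf : (fun k => ((Real.sqrt (hA.1.eigenvalues k) : ℝ) : ℂ))
        * (fun k => ((Real.sqrt (hA.1.eigenvalues k) : ℝ) : ℂ))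
        = fun k => ((hA.1.eigenvalues k : ℝ) : ℂ) := by
      funext k
      rw [Pi.mul_apply, ← Complex.ofReal_mul, Real.mul_self_sqrt (hA.eigenvalues_nonneg k)]
    rw [hf]
    exact hA.1.spectral_theorem.symm
  have hMB : M = B := by
    open scoped MatrixOrder in
    exact (CFC.sqrt_unique hMM hMpsd.nonneg).symm.trans (CFC.sqrt_unique hB2 hB.nonneg)
  rw [hMeq, hMB]

lemma gm_exists_dual_matrix (D : Matrix I I ℂ) (hD : D.IsHermitian) :
    ∃ U : Matrix I I ℂ, U.IsHermitian ∧
      (∀ w : I → ℂ, |(star w ⬝ᵥ U *ᵥ w).re| ≤ (star w ⬝ᵥ w).re) ∧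
      traceNorm D = ((U * D).trace).re := by
  set V : Matrix I I ℂ := ↑(hD.eigenvectorUnitary) with hVdef
  have hV1 : star V * V = 1 := mem_unitaryGroup_iff'.mp (hD.eigenvectorUnitary).2
  have hV2 : V * star V = 1 := mem_unitaryGroup_iff.mp (hD.eigenvectorUnitary).2
  set lam : I → ℝ := hD.eigenvalues with hlam
  have hspec : D = V * Matrix.diagonal (fun k => (lam k : ℂ)) * star V := hD.spectral_theorem
  set sgn : I → ℝ := fun k => if lam k < 0 then -1 else 1 with hsgn
  refine ⟨V * Matrix.diagonal (fun k => (sgn k : ℂ)) * star V, ?_, ?_, ?_⟩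
  · show _ᴴ = _
    rw [Matrix.conjTranspose_mul, Matrix.conjTranspose_mul, Matrix.diagonal_conjTranspose]
    have h1 : (star V)ᴴ = V := by rw [Matrix.star_eq_conjTranspose,
      Matrix.conjTranspose_conjTranspose]
    have h2 : star (fun k => (sgn k : ℂ)) = fun k => (sgn k : ℂ) := by
      funext k; simp [Complex.star_def, Complex.conj_ofReal]
    rw [h1, h2, Matrix.star_eq_conjTranspose, mul_assoc]
  · intro w
    set y : I → ℂ := star V *ᵥ w with hy
    have hsy : star y = star w ᵥ* V := by
      rw [hy, Matrix.star_mulVec, Matrix.star_eq_conjTranspose,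
        Matrix.conjTranspose_conjTranspose]
    have key : star w ⬝ᵥ (V * Matrix.diagonal (fun k => (sgn k : ℂ)) * star V) *ᵥ w
        = ∑ k, (sgn k : ℂ) * (Complex.normSq (y k) : ℂ) := by
      rw [← Matrix.mulVec_mulVec, ← Matrix.mulVec_mulVec, Matrix.dotProduct_mulVec (star w),
        ← hsy]
      rw [show (Matrix.diagonal (fun k => (sgn k : ℂ)) *ᵥ y) = fun k => (sgn k : ℂ) * y k from
        funext fun k => Matrix.mulVec_diagonal _ _ _]
      rw [dotProduct]
      refine Finset.sum_congr rfl fun k _ => ?_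
      simp only [Pi.star_apply, Complex.star_def]
      rw [show (starRingEnd ℂ) (y k) * ((sgn k : ℂ) * y k)
          = (sgn k : ℂ) * ((starRingEnd ℂ) (y k) * y k) from by ring,
        Complex.normSq_eq_conj_mul_self]
    have hww : star w ⬝ᵥ w = ∑ k, (Complex.normSq (y k) : ℂ) := by
      have h1 : star y ⬝ᵥ y = star w ⬝ᵥ w := by
        rw [hsy, hy, Matrix.dotProduct_mulVec, Matrix.vecMul_vecMul, hV2, Matrix.vecMul_one]
      rw [← h1, dotProduct]
      refine Finset.sum_congr rfl fun k _ => ?_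
      simp only [Pi.star_apply, Complex.star_def]
      rw [Complex.normSq_eq_conj_mul_self]
    rw [key, hww, Complex.re_sum, Complex.re_sum]
    calc |∑ k, ((sgn k : ℂ) * (Complex.normSq (y k) : ℂ)).re|
        ≤ ∑ k, |((sgn k : ℂ) * (Complex.normSq (y k) : ℂ)).re| :=
          Finset.abs_sum_le_sum_abs _ _
      _ ≤ ∑ k, ((Complex.normSq (y k) : ℂ)).re := by
          refine Finset.sum_le_sum fun k _ => ?_
          rw [← Complex.ofReal_mul, Complex.ofReal_re, Complex.ofReal_re, abs_mul]
          have : |sgn k| = 1 := by rw [hsgn]; dsimp only; split <;> simp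
          rw [this, one_mul, abs_of_nonneg (Complex.normSq_nonneg _)]
  · -- trace norm equality
    set B : Matrix I I ℂ := V * Matrix.diagonal (fun k => ((|lam k| : ℝ) : ℂ)) * star V with hB
    have hBpsd : B.PosSemidef := by
      have hsq : (fun k => ((Real.sqrt |lam k| : ℝ) : ℂ))
            * (fun k => ((Real.sqrt |lam k| : ℝ) : ℂ))
          = fun k => ((|lam k| : ℝ) : ℂ) := by
        funext k
        rw [Pi.mul_apply, ← Complex.ofReal_mul, Real.mul_self_sqrt (abs_nonneg _)]
      have hC : B = (V * Matrix.diagonal (fun k => ((Real.sqrt |lam k| : ℝ) : ℂ)) * star V)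
          * (V * Matrix.diagonal (fun k => ((Real.sqrt |lam k| : ℝ) : ℂ)) * star V)ᴴ := by
        have hH : (V * Matrix.diagonal (fun k => ((Real.sqrt |lam k| : ℝ) : ℂ)) * star V)ᴴ
            = V * Matrix.diagonal (fun k => ((Real.sqrt |lam k| : ℝ) : ℂ)) * star V := by
          rw [Matrix.conjTranspose_mul, Matrix.conjTranspose_mul,
            Matrix.diagonal_conjTranspose]
          have h1 : (star V)ᴴ = V := by rw [Matrix.star_eq_conjTranspose,
            Matrix.conjTranspose_conjTranspose]
          have h2 : star (fun k => ((Real.sqrt |lam k| : ℝ) : ℂ))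
              = fun k => ((Real.sqrt |lam k| : ℝ) : ℂ) := by
            funext k; simp [Complex.star_def, Complex.conj_ofReal]
          rw [h1, h2, Matrix.star_eq_conjTranspose, mul_assoc]
        rw [hH, gm_unit_conj_mul hV1, hsq, hB]
      rw [hC]
      exact Matrix.posSemidef_self_mul_conjTranspose _
    have hB2 : B ^ 2 = Dᴴ * D := by
      have habs : (fun k => ((|lam k| : ℝ) : ℂ)) * (fun k => ((|lam k| : ℝ) : ℂ))
          = (fun k => ((lam k : ℝ) : ℂ)) * (fun k => ((lam k : ℝ) : ℂ)) := by
        funext k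
        rw [Pi.mul_apply, Pi.mul_apply, ← Complex.ofReal_mul, ← Complex.ofReal_mul,
          abs_mul_abs_self]
      rw [pow_two, hB, gm_unit_conj_mul hV1, hD.eq, habs, hspec, gm_unit_conj_mul hV1]
    have hsqrt : traceNorm D = B.trace.re :=
      gm_traceNorm_eq D B hBpsd (by rw [← pow_two]; exact hB2)
    have hmul : (fun k => (sgn k : ℂ)) * (fun k => (lam k : ℂ))
        = fun k => ((sgn k * lam k : ℝ) : ℂ) := by
      funext k; rw [Pi.mul_apply, ← Complex.ofReal_mul]
    have hUD : (V * Matrix.diagonal (fun k => (sgn k : ℂ)) * star V) * D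
        = V * Matrix.diagonal (fun k => ((sgn k * lam k : ℝ) : ℂ)) * star V := by
      nth_rewrite 1 [hspec]
      rw [gm_unit_conj_mul hV1, hmul]
    rw [hsqrt, hB, gm_unit_conj_trace hV1, hUD, gm_unit_conj_trace hV1,
      Complex.re_sum, Complex.re_sum]
    refine Finset.sum_congr rfl fun k _ => ?_
    rw [Complex.ofReal_re, Complex.ofReal_re, hsgn]
    dsimp only
    split
    · rename_i h; rw [abs_of_neg h]; ring
    · rename_i h; rw [abs_of_nonneg (not_lt.mp h)]; ring

lemma gm_traceNorm_zero : traceNorm (0 : Matrix I I ℂ) = 0 := by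
  have h : traceNorm (0 : Matrix I I ℂ) = (0 : Matrix I I ℂ).trace.re :=
    gm_traceNorm_eq 0 0 Matrix.PosSemidef.zero (by simp)
  rw [h]
  simp

/-! #### The key scalar inequality -/

lemma gm_scalar_key (u α β x y z : ℝ) (hu0 : 0 < u) (hu1 : u < 1)
    (h1 : x + 2*((1+u)/u)*y + ((1+u)/u)^2*z ≤ α + ((1+u)/u)^2*β)
    (h2 : -(α + (-((1-u)/u))^2*β) ≤ x + 2*(-((1-u)/u))*y + (-((1-u)/u))^2*z) :
    (1 - 1/(1-u^2))*x + 2*y + z ≤ (u/(1-u^2))*α + (1/u)*β := by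
  have hu1' : (0:ℝ) < 1 - u := by linarith
  have hu2 : (0:ℝ) < 1 + u := by linarith
  have hsq : (0:ℝ) < 1 - u^2 := by nlinarith
  have e1 : 0 ≤ (α + ((1+u)/u)^2*β) - (x + 2*((1+u)/u)*y + ((1+u)/u)^2*z) := by linarith
  have e2 : 0 ≤ (x + 2*(-((1-u)/u))*y + (-((1-u)/u))^2*z) + (α + (-((1-u)/u))^2*β) := by
    linarith
  have c1 : (0:ℝ) ≤ u/(2*(1+u)) := by positivity
  have c2 : (0:ℝ) ≤ u/(2*(1-u)) := div_nonneg hu0.le (by linarith)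
  have hid : (u/(1-u^2))*α + (1/u)*β - ((1 - 1/(1-u^2))*x + 2*y + z)
      = (u/(2*(1+u))) * ((α + ((1+u)/u)^2*β) - (x + 2*((1+u)/u)*y + ((1+u)/u)^2*z))
        + (u/(2*(1-u))) * ((x + 2*(-((1-u)/u))*y + (-((1-u)/u))^2*z)
            + (α + (-((1-u)/u))^2*β)) := by
    field_simp
    ring
  nlinarith [mul_nonneg c1 e1, mul_nonneg c2 e2]

/-! #### The per-vector bound -/

lemma gm_pervec (U Q : Matrix I I ℂ) (hUH : U.IsHermitian)
    (hU : ∀ w : I → ℂ, |(star w ⬝ᵥ U *ᵥ w).re| ≤ (star w ⬝ᵥ w).re)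
    (hQH : Q.IsHermitian) (hQ2 : Q * Q = Q)
    (u : ℝ) (hu0 : 0 < u) (hu1 : u < 1) (v : I → ℂ) :
    (star v ⬝ᵥ U *ᵥ v).re - (1-u^2)⁻¹ * (star (Q *ᵥ v) ⬝ᵥ U *ᵥ (Q *ᵥ v)).re
      ≤ (u/(1-u^2)) * (star (Q *ᵥ v) ⬝ᵥ (Q *ᵥ v)).re
        + (1/u) * ((star v ⬝ᵥ v).re - (star (Q *ᵥ v) ⬝ᵥ (Q *ᵥ v)).re) := by
  set a : I → ℂ := Q *ᵥ v with ha
  set b : I → ℂ := v - a with hb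
  have hv : v = a + b := by rw [hb]; ring
  have hQb : Q *ᵥ b = 0 := by
    rw [hb, Matrix.mulVec_sub, ha, Matrix.mulVec_mulVec, hQ2, sub_self]
  have hab : star a ⬝ᵥ b = 0 := by
    rw [ha, Matrix.star_mulVec, hQH.eq, ← Matrix.dotProduct_mulVec, hQb,
      dotProduct_zero]
  have hba : star b ⬝ᵥ a = 0 := by
    rw [Matrix.star_dotProduct, hab, star_zero]
  have hcross : star b ⬝ᵥ U *ᵥ a = star (star a ⬝ᵥ U *ᵥ b) := by
    rw [Matrix.star_dotProduct (v := b), Matrix.star_mulVec, hUH.eq,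
      ← Matrix.dotProduct_mulVec]
  have hstark : ∀ (k : ℝ) (w : I → ℂ), star ((k:ℂ) • w) = (k:ℂ) • star w := by
    intro k w
    rw [star_smul, Complex.star_def, Complex.conj_ofReal]
  have expandC : ∀ (k : ℝ) (M : Matrix I I ℂ),
      star (a + (k:ℂ) • b) ⬝ᵥ M *ᵥ (a + (k:ℂ) • b)
        = (star a ⬝ᵥ M *ᵥ a) + (k:ℂ) * (star a ⬝ᵥ M *ᵥ b)
          + (k:ℂ) * (star b ⬝ᵥ M *ᵥ a) + ((k:ℂ) * (k:ℂ)) * (star b ⬝ᵥ M *ᵥ b) := by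
    intro k M
    rw [Matrix.mulVec_add, Matrix.mulVec_smul, star_add, hstark, add_dotProduct,
      smul_dotProduct, dotProduct_add, dotProduct_add,
      dotProduct_smul, dotProduct_smul,
      smul_eq_mul, smul_eq_mul, smul_eq_mul]
    ring
  have reify : ∀ (k : ℝ) (A B C E : ℂ),
      (A + (k:ℂ) * B + (k:ℂ) * C + ((k:ℂ) * (k:ℂ)) * E).re
        = A.re + k * B.re + k * C.re + (k*k) * E.re := by
    intro k A B C E
    simp [Complex.add_re, Complex.mul_re, Complex.ofReal_re, Complex.ofReal_im]
  set α : ℝ := (star a ⬝ᵥ a).re with hα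
  set β : ℝ := (star b ⬝ᵥ b).re with hβ
  set x : ℝ := (star a ⬝ᵥ U *ᵥ a).re with hx
  set y : ℝ := (star a ⬝ᵥ U *ᵥ b).re with hy
  set z : ℝ := (star b ⬝ᵥ U *ᵥ b).re with hz
  have hcross_re : (star b ⬝ᵥ U *ᵥ a).re = y := by
    rw [hcross, Complex.star_def, Complex.conj_re]
  have expandU : ∀ k : ℝ, (star (a + (k:ℂ) • b) ⬝ᵥ U *ᵥ (a + (k:ℂ) • b)).re
      = x + 2*k*y + (k*k)*z := by
    intro k
    rw [expandC k U, reify, hcross_re, ← hx, ← hy, ← hz]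
    ring
  have expandN : ∀ k : ℝ, (star (a + (k:ℂ) • b) ⬝ᵥ (a + (k:ℂ) • b)).re = α + (k*k)*β := by
    intro k
    have h1 : star (a + (k:ℂ) • b) ⬝ᵥ (a + (k:ℂ) • b)
        = (star a ⬝ᵥ a) + (k:ℂ) * (star a ⬝ᵥ b)
          + (k:ℂ) * (star b ⬝ᵥ a) + ((k:ℂ) * (k:ℂ)) * (star b ⬝ᵥ b) := by
      rw [star_add, hstark, add_dotProduct, smul_dotProduct,
        dotProduct_add, dotProduct_add, dotProduct_smul,
        dotProduct_smul, smul_eq_mul, smul_eq_mul, smul_eq_mul]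
      ring
    rw [h1, reify, hab, hba, ← hα, ← hβ]
    simp
  have h1 : x + 2*((1+u)/u)*y + (((1+u)/u)*((1+u)/u))*z
      ≤ α + (((1+u)/u)*((1+u)/u))*β := by
    have := (abs_le.mp (hU (a + (((1+u)/u : ℝ):ℂ) • b))).2
    rwa [expandU, expandN] at this
  have h2 : -(α + ((-((1-u)/u))*(-((1-u)/u)))*β)
      ≤ x + 2*(-((1-u)/u))*y + ((-((1-u)/u))*(-((1-u)/u)))*z := by
    have := (abs_le.mp (hU (a + ((-((1-u)/u) : ℝ):ℂ) • b))).1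
    rw [expandU, expandN] at this
    linarith
  have hv1 : (star v ⬝ᵥ U *ᵥ v).re = x + 2*y + z := by
    have := expandU 1
    rw [Complex.ofReal_one, one_smul] at this
    rw [← hv] at this
    rw [this]; ring
  have hvv : (star v ⬝ᵥ v).re = α + β := by
    have := expandN 1
    rw [Complex.ofReal_one, one_smul] at this
    rw [← hv] at this
    rw [this]; ring
  rw [hv1, hvv]
  have := gm_scalar_key u α β x y z hu0 hu1 (by rw [pow_two]; exact h1)
    (by rw [pow_two]; exact h2)
  have hsq : (0:ℝ) < 1 - u^2 := by nlinarith
  rw [one_div] at this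
  linarith [this]

/-! #### Summation over columns -/

lemma gm_sum_col_dot (M B : Matrix I I ℂ) :
    ∑ i, (star (fun j => B j i) ⬝ᵥ M *ᵥ (fun j => B j i)) = (M * (B * Bᴴ)).trace := by
  simp only [dotProduct, Matrix.mulVec, Pi.star_apply, Matrix.trace, Matrix.diag,
    Matrix.mul_apply, Matrix.conjTranspose_apply, Finset.mul_sum]
  rw [Finset.sum_comm]
  refine Finset.sum_congr rfl fun j _ => ?_
  rw [Finset.sum_comm]
  refine Finset.sum_congr rfl fun k _ => ?_
  refine Finset.sum_congr rfl fun i _ => ?_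
  ring

/-! #### The main analytic bound -/

lemma gm_stepB (ρ Q : Matrix I I ℂ) (hρ : ρ.PosSemidef) (htr : ρ.trace = 1)
    (hQH : Q.IsHermitian) (hQ2 : Q * Q = Q)
    (c u : ℝ) (hc : c = (Q * ρ).trace.re) (hu0 : 0 < u) (hu1 : u < 1) (hcu : c = 1 - u^2) :
    traceNorm (ρ - c⁻¹ • (Q * ρ * Q)) ≤ 2 * u := by
  have hsmulre : ∀ (r : ℝ) (w : ℂ), (r • w).re = r * w.re := fun r w => by
    rw [Complex.real_smul, Complex.mul_re]
    simp
  set S := (open scoped MatrixOrder in CFC.sqrt ρ) with hS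
  have hSps : S.PosSemidef :=
    (open scoped MatrixOrder in Matrix.nonneg_iff_posSemidef.mp (CFC.sqrt_nonneg ρ))
  have hSH : Sᴴ = S := hSps.1
  have hSS : S * S = ρ := (open scoped MatrixOrder in CFC.sqrt_mul_sqrt_self ρ hρ.nonneg)
  have hQρQH : (Q * ρ * Q).IsHermitian := by
    show _ᴴ = _
    rw [Matrix.conjTranspose_mul, Matrix.conjTranspose_mul, hQH.eq, hρ.1.eq, mul_assoc]
  have hDH : (ρ - c⁻¹ • (Q * ρ * Q)).IsHermitian := by
    show _ᴴ = _
    rw [Matrix.conjTranspose_sub, Matrix.conjTranspose_smul, hρ.1.eq, hQρQH.eq, star_trivial]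
  obtain ⟨U, hUH, hUc, hUtr⟩ := gm_exists_dual_matrix _ hDH
  rw [hUtr]
  have hsplit : (U * (ρ - c⁻¹ • (Q * ρ * Q))).trace.re
      = (U * ρ).trace.re - c⁻¹ * (U * (Q * ρ * Q)).trace.re := by
    rw [mul_sub, mul_smul_comm, Matrix.trace_sub, Matrix.trace_smul, Complex.sub_re, hsmulre]
  rw [hsplit]
  have hQS : ∀ i, Q *ᵥ (fun j => S j i) = (fun j => (Q * S) j i) := by
    intro i; funext j
    simp [Matrix.mulVec, dotProduct, Matrix.mul_apply]
  have hSSH : S * Sᴴ = ρ := by rw [hSH, hSS]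
  have hQSQS : (Q * S) * (Q * S)ᴴ = Q * ρ * Q := by
    rw [Matrix.conjTranspose_mul, hSH, hQH.eq]
    rw [show Q * S * (S * Q) = Q * (S * S) * Q from by noncomm_ring, hSS]
  have h1 : ∑ i, (star (fun j => S j i) ⬝ᵥ U *ᵥ (fun j => S j i)) = (U * ρ).trace := by
    rw [gm_sum_col_dot, hSSH]
  have h2 : ∑ i, (star (fun j => (Q*S) j i) ⬝ᵥ U *ᵥ (fun j => (Q*S) j i))
      = (U * (Q * ρ * Q)).trace := by
    rw [gm_sum_col_dot, hQSQS]
  have h3 : ∑ i, (star (fun j => (Q*S) j i) ⬝ᵥ (fun j => (Q*S) j i)) = (Q * ρ * Q).trace := by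
    have := gm_sum_col_dot 1 (Q * S)
    rw [one_mul, hQSQS] at this
    simpa [Matrix.one_mulVec] using this
  have h4 : ∑ i, (star (fun j => S j i) ⬝ᵥ (fun j => S j i)) = ρ.trace := by
    have := gm_sum_col_dot 1 S
    rw [one_mul, hSSH] at this
    simpa [Matrix.one_mulVec] using this
  have htrQρQ : (Q * ρ * Q).trace = (Q * ρ).trace := by
    rw [Matrix.trace_mul_cycle, hQ2]
  have hper : ∀ i : I, (star (fun j => S j i) ⬝ᵥ U *ᵥ (fun j => S j i)).re
      - (1 - u^2)⁻¹ * (star (fun j => (Q*S) j i) ⬝ᵥ U *ᵥ (fun j => (Q*S) j i)).re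
      ≤ (u/(1-u^2)) * (star (fun j => (Q*S) j i) ⬝ᵥ (fun j => (Q*S) j i)).re
        + (1/u) * ((star (fun j => S j i) ⬝ᵥ (fun j => S j i)).re
            - (star (fun j => (Q*S) j i) ⬝ᵥ (fun j => (Q*S) j i)).re) := by
    intro i
    have := gm_pervec U Q hUH hUc hQH hQ2 u hu0 hu1 (fun j => S j i)
    rwa [hQS i] at this
  calc (U * ρ).trace.re - c⁻¹ * (U * (Q*ρ*Q)).trace.re
      = ∑ i, ((star (fun j => S j i) ⬝ᵥ U *ᵥ (fun j => S j i)).re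
          - (1-u^2)⁻¹ * (star (fun j => (Q*S) j i) ⬝ᵥ U *ᵥ (fun j => (Q*S) j i)).re) := by
        rw [Finset.sum_sub_distrib, ← Finset.mul_sum, ← Complex.re_sum, ← Complex.re_sum,
          h1, h2, hcu]
    _ ≤ ∑ i, ((u/(1-u^2)) * (star (fun j => (Q*S) j i) ⬝ᵥ (fun j => (Q*S) j i)).re
          + (1/u) * ((star (fun j => S j i) ⬝ᵥ (fun j => S j i)).re
              - (star (fun j => (Q*S) j i) ⬝ᵥ (fun j => (Q*S) j i)).re)) :=
        Finset.sum_le_sum fun i _ => hper i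
    _ = (u/(1-u^2)) * c + (1/u) * (1 - c) := by
        rw [Finset.sum_add_distrib, ← Finset.mul_sum, ← Finset.mul_sum,
          Finset.sum_sub_distrib, ← Complex.re_sum, ← Complex.re_sum, h3, h4, htrQρQ,
          htr, ← hc]
        norm_num
    _ = 2 * u := by
        have hpos : (0:ℝ) < 1 - u^2 := by nlinarith
        rw [hcu]
        field_simp
        ring

end GentleAux

/-- gentle measurement: `‖ρ − QρQ/c‖₁ ≤ 2√(∑ₛ Tr[(I − Pₛ) ρ_{Aₛ}])`. -/
theorem statement1 {n : ℕ} {d : Fin n → ℕ}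
    (ρ : Matrix (∀ s, Fin (d s)) (∀ s, Fin (d s)) ℂ) (hρ : ρ.IsDensity)
    (P : ∀ s, Matrix (Fin (d s)) (Fin (d s)) ℂ) (hP : ∀ s, (P s).IsOrthoProj)
    (c : ℝ) (hc : c = ((piKron P) * ρ).trace.re) (hcpos : 0 < c) :
    traceNorm (ρ - c⁻¹ • (piKron P * ρ * piKron P)) ≤
      2 * Real.sqrt (∑ s, ((1 - P s) * pmarginal ρ s).trace.re) := by
  obtain ⟨hρpsd, hρtr⟩ := hρ
  set Q : Matrix (∀ s, Fin (d s)) (∀ s, Fin (d s)) ℂ := piKron P with hQdef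
  have hQop : Q.IsOrthoProj := by
    rw [hQdef, ← gmQT_univ]
    exact gmQT_isOrthoProj hP _
  have h1c : 1 - c = ((1 - Q) * ρ).trace.re := by
    rw [sub_mul, one_mul, Matrix.trace_sub, Complex.sub_re, hρtr, hc]
    norm_num
  have hc1 : c ≤ 1 := by
    have := gm_trace_mul_re_nonneg (gm_orthoProj_posSemidef (gm_orthoProj_one_sub hQop)) hρpsd
    rw [← h1c] at this
    linarith
  -- union bound
  have hterm : ∀ s, ((1 - gmQT P {s}) * ρ).trace.re = ((1 - P s) * pmarginal ρ s).trace.re := by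
    intro s
    rw [sub_mul, one_mul, sub_mul, one_mul, Matrix.trace_sub, Matrix.trace_sub,
      gmQT_singleton_trace, gm_pmarginal_trace]
  have hsum : 1 - c ≤ ∑ s, ((1 - P s) * pmarginal ρ s).trace.re := by
    have hub := gm_union_bound hP ρ hρpsd Finset.univ
    rw [gmQT_univ] at hub
    calc 1 - c = ((1 - Q) * ρ).trace.re := h1c
      _ ≤ ∑ s, ((1 - gmQT P {s}) * ρ).trace.re := hub
      _ = ∑ s, ((1 - P s) * pmarginal ρ s).trace.re :=
        Finset.sum_congr rfl fun s _ => hterm s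
  have hSig0 : (0:ℝ) ≤ ∑ s, ((1 - P s) * pmarginal ρ s).trace.re := by linarith
  by_cases hceq : c = 1
  · -- degenerate case : the state is already inside the range of Q
    have htr0 : ((1 - Q) * ρ).trace.re = 0 := by rw [← h1c, hceq]; ring
    set T : Matrix (∀ s, Fin (d s)) (∀ s, Fin (d s)) ℂ := 1 - Q with hT
    have hTop : T.IsOrthoProj := gm_orthoProj_one_sub hQop
    set S := (open scoped MatrixOrder in CFC.sqrt ρ) with hSdef
    have hSH : Sᴴ = S :=
      (open scoped MatrixOrder in (Matrix.nonneg_iff_posSemidef.mp (CFC.sqrt_nonneg ρ)).1)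
    have hSS : S * S = ρ := (open scoped MatrixOrder in CFC.sqrt_mul_sqrt_self ρ hρpsd.nonneg)
    have hAA : ((T * S) * (T * S)ᴴ).trace.re = 0 := by
      have hmat : (T * S) * (T * S)ᴴ = T * ρ * T := by
        rw [Matrix.conjTranspose_mul, hSH, hTop.1.eq]
        rw [show T * S * (S * T) = T * (S * S) * T from by noncomm_ring, hSS]
      have hcyc : (T * ρ * T).trace = (T * ρ).trace := by
        rw [Matrix.trace_mul_cycle, hTop.2]
      rw [hmat, hcyc, htr0]
    have hTS : T * S = 0 := gm_eq_zero_of_trace_self_mul_conjTranspose hAA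
    have hTρ : T * ρ = 0 := by
      rw [← hSS, ← Matrix.mul_assoc, hTS, Matrix.zero_mul]
    have hρT : ρ * T = 0 := by
      have := congrArg Matrix.conjTranspose hTρ
      rwa [Matrix.conjTranspose_mul, hρpsd.1.eq, hTop.1.eq, Matrix.conjTranspose_zero] at this
    have hQρ : Q * ρ = ρ := by
      have h' : (1 - Q) * ρ = 0 := hTρ
      rw [sub_mul, one_mul, sub_eq_zero] at h'
      exact h'.symm
    have hρQ : ρ * Q = ρ := by
      have h' : ρ * (1 - Q) = 0 := hρT
      rw [mul_sub, mul_one, sub_eq_zero] at h'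
      exact h'.symm
    have hmat0 : ρ - c⁻¹ • (Q * ρ * Q) = 0 := by
      rw [hQρ, hρQ, hceq]
      norm_num
    rw [hQdef] at hmat0
    rw [hmat0, gm_traceNorm_zero]
    positivity
  · have hclt : c < 1 := lt_of_le_of_ne hc1 hceq
    set u : ℝ := Real.sqrt (1 - c) with hu
    have hu0 : 0 < u := Real.sqrt_pos.mpr (by linarith)
    have hcu : c = 1 - u^2 := by
      rw [hu, Real.sq_sqrt (by linarith : (0:ℝ) ≤ 1 - c)]
      ring
    have hu1 : u < 1 := by
      nlinarith [Real.sqrt_nonneg (1 - c), hcu]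
    have hmain := gm_stepB ρ Q hρpsd hρtr hQop.1 hQop.2 c u hc hu0 hu1 hcu
    calc traceNorm (ρ - c⁻¹ • (Q * ρ * Q)) ≤ 2 * u := hmain
      _ ≤ 2 * Real.sqrt (∑ s, ((1 - P s) * pmarginal ρ s).trace.re) := by
          have : u ≤ Real.sqrt (∑ s, ((1 - P s) * pmarginal ρ s).trace.re) := by
            rw [hu]
            exact Real.sqrt_le_sqrt hsum
          linarith
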